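/- arXiv:1102.3402 — 3 statements merged into one kernel-verified Lean document; each statement's English description precedes it below -/
import Mathlib

section
/- Let λ and κ be Borel probability measures on ℝ without atoms, let β ∈ ℝ and n ≥ 2. Then for every k ∈ {1,…,n}, the μ_{n,λ×κ,β}-probability of the set of ((x_1,y_1),…,(x_n,y_n)) ∈ (ℝ²)ⁿ for which there exist indices i_1 < … < i_k such that (x_{i_j} − x_{i_ℓ})(y_{i_j} − y_{i_ℓ}) > 0 for all j ≠ ℓ equals μ_{n,exp(−β/(n−1))}({π ∈ S_n : ℓ(π) ≥ k}). -/
open Filter MeasureTheory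
open scoped ENNReal

/-- Number of inversions of a permutation of `Fin n`. -/
def inversions {n : ℕ} (π : Equiv.Perm (Fin n)) : ℕ :=
  (Finset.univ.filter (fun p : Fin n × Fin n => p.1 < p.2 ∧ π p.2 < π p.1)).card

/-- Length of the longest increasing subsequence of a permutation of `Fin n`. -/
def lisLength {n : ℕ} (π : Equiv.Perm (Fin n)) : ℕ :=
  Finset.univ.powerset.sup fun s : Finset (Fin n) =>
    if ∀ i ∈ s, ∀ j ∈ s, i < j → π i < π j then s.card else 0

/-- The Mallows(n,q) probability of a set of permutations. -/
noncomputable def mallowsProb (n : ℕ) (q : ℝ) (A : Set (Equiv.Perm (Fin n))) : ℝ :=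
  (∑ π : Equiv.Perm (Fin n), A.indicator (fun π => q ^ inversions π) π) /
    (∑ π : Equiv.Perm (Fin n), q ^ inversions π)

/-- Two-body interaction `h(x,y) = 1{xy < 0}`. -/
noncomputable def hInt (p : ℝ × ℝ) : ℝ := if p.1 * p.2 < 0 then 1 else 0

/-- The `n`-particle Hamiltonian `H_n = (n-1)⁻¹ Σ_{i<j} h(x_i-x_j, y_i-y_j)`. -/
noncomputable def hamiltonian (n : ℕ) (z : Fin n → ℝ × ℝ) : ℝ :=
  ((n : ℝ) - 1)⁻¹ *
    ∑ i : Fin n, ∑ j : Fin n,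
      if i < j then hInt ((z i).1 - (z j).1, (z i).2 - (z j).2) else 0

/-- Partition function of the Boltzmann–Gibbs measure. -/
noncomputable def gibbsZ (n : ℕ) (α : Measure (ℝ × ℝ)) (β : ℝ) : ℝ :=
  ∫ z, Real.exp (-β * hamiltonian n z) ∂(Measure.pi fun _ : Fin n => α)

/-- The Boltzmann–Gibbs measure `μ_{n,α,β}` on `(ℝ²)ⁿ`. -/
noncomputable def gibbs (n : ℕ) (α : Measure (ℝ × ℝ)) (β : ℝ) : Measure (Fin n → ℝ × ℝ) :=
  (Measure.pi fun _ : Fin n => α).withDensity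
    fun z => ENNReal.ofReal (Real.exp (-β * hamiltonian n z) / gibbsZ n α β)

namespace GM

open Equiv Set

variable {n : ℕ}

def Ee (σ τ : Equiv.Perm (Fin n)) : Set (Fin n → ℝ × ℝ) :=
  {z | StrictMono (fun a => (z (σ a)).1) ∧ StrictMono (fun a => (z (τ a)).2)}

lemma lt_iff_perm {x : Fin n → ℝ} {σ : Equiv.Perm (Fin n)} (hx : StrictMono (fun a => x (σ a)))
    (i j : Fin n) : x i < x j ↔ σ⁻¹ i < σ⁻¹ j := by
  constructor
  · intro h
    rcases lt_trichotomy (σ⁻¹ i) (σ⁻¹ j) with hlt | heq | hgt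
    · exact hlt
    · exfalso; have : i = j := by simpa using congrArg σ heq
      subst this; exact lt_irrefl _ h
    · exfalso
      have := hx hgt
      simp only [Equiv.Perm.inv_def, Equiv.apply_symm_apply] at this
      exact absurd h (not_lt.2 this.le)
  · intro h
    have := hx h
    simpa only [Equiv.Perm.inv_def, Equiv.apply_symm_apply] using this

lemma lt_iff_perm1 {z : Fin n → ℝ × ℝ} {σ : Equiv.Perm (Fin n)}
    (hx : StrictMono (fun a => (z (σ a)).1)) (i j : Fin n) :
    (z i).1 < (z j).1 ↔ σ⁻¹ i < σ⁻¹ j :=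
  lt_iff_perm (x := fun i => (z i).1) hx i j

lemma lt_iff_perm2 {z : Fin n → ℝ × ℝ} {τ : Equiv.Perm (Fin n)}
    (hy : StrictMono (fun a => (z (τ a)).2)) (i j : Fin n) :
    (z i).2 < (z j).2 ↔ τ⁻¹ i < τ⁻¹ j :=
  lt_iff_perm (x := fun i => (z i).2) hy i j

lemma two_mul_card_lt (S : Fin n → Fin n → Prop) [DecidableRel S]
    (hsym : ∀ i j, S i j → S j i) :
    (Finset.univ.filter fun p : Fin n × Fin n => p.1 ≠ p.2 ∧ S p.1 p.2).card
      = 2 * (Finset.univ.filter fun p : Fin n × Fin n => p.1 < p.2 ∧ S p.1 p.2).card := by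
  have h1 : (Finset.univ.filter fun p : Fin n × Fin n => p.1 ≠ p.2 ∧ S p.1 p.2)
      = (Finset.univ.filter fun p : Fin n × Fin n => p.1 < p.2 ∧ S p.1 p.2)
        ∪ (Finset.univ.filter fun p : Fin n × Fin n => p.2 < p.1 ∧ S p.1 p.2) := by
    ext p
    simp only [Finset.mem_filter, Finset.mem_union, Finset.mem_univ, true_and]
    constructor
    · rintro ⟨hne, hS⟩
      rcases lt_or_gt_of_ne hne with h | h
      · exact Or.inl ⟨h, hS⟩
      · exact Or.inr ⟨h, hS⟩
    · rintro (⟨h, hS⟩ | ⟨h, hS⟩)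
      · exact ⟨ne_of_lt h, hS⟩
      · exact ⟨ne_of_gt h, hS⟩
  have hdisj : Disjoint (Finset.univ.filter fun p : Fin n × Fin n => p.1 < p.2 ∧ S p.1 p.2)
      (Finset.univ.filter fun p : Fin n × Fin n => p.2 < p.1 ∧ S p.1 p.2) := by
    rw [Finset.disjoint_left]
    intro p hp1 hp2
    simp only [Finset.mem_filter] at hp1 hp2
    exact absurd hp2.2.1 (not_lt.2 hp1.2.1.le)
  have h2 : (Finset.univ.filter fun p : Fin n × Fin n => p.2 < p.1 ∧ S p.1 p.2).card
      = (Finset.univ.filter fun p : Fin n × Fin n => p.1 < p.2 ∧ S p.1 p.2).card := by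
    apply Finset.card_bij' (fun p _ => Prod.swap p) (fun p _ => Prod.swap p)
    · intro p hp
      simp only [Finset.mem_filter, Finset.mem_univ, true_and] at hp ⊢
      exact ⟨hp.1, hsym _ _ hp.2⟩
    · intro p hp
      simp only [Finset.mem_filter, Finset.mem_univ, true_and] at hp ⊢
      exact ⟨hp.1, hsym _ _ hp.2⟩
    · intro p _; simp
    · intro p _; simp
  rw [h1, Finset.card_union_of_disjoint hdisj, h2, two_mul]

lemma card_transfer (S T : Fin n → Fin n → Prop) [DecidableRel S] [DecidableRel T]
    (hS : ∀ i j, S i j → S j i) (hT : ∀ i j, T i j → T j i)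
    (e : Equiv.Perm (Fin n)) (h : ∀ i j, i ≠ j → (S i j ↔ T (e i) (e j))) :
    (Finset.univ.filter fun p : Fin n × Fin n => p.1 < p.2 ∧ S p.1 p.2).card
      = (Finset.univ.filter fun p : Fin n × Fin n => p.1 < p.2 ∧ T p.1 p.2).card := by
  have key : (Finset.univ.filter fun p : Fin n × Fin n => p.1 ≠ p.2 ∧ S p.1 p.2).card
      = (Finset.univ.filter fun p : Fin n × Fin n => p.1 ≠ p.2 ∧ T p.1 p.2).card := by
    apply Finset.card_bij' (fun p _ => (e p.1, e p.2)) (fun p _ => (e⁻¹ p.1, e⁻¹ p.2))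
    · intro p hp
      simp only [Finset.mem_filter, Finset.mem_univ, true_and] at hp ⊢
      refine ⟨fun hc => hp.1 (e.injective hc), ?_⟩
      exact (h p.1 p.2 hp.1).1 hp.2
    · intro p hp
      simp only [Finset.mem_filter, Finset.mem_univ, true_and] at hp ⊢
      have hne : e⁻¹ p.1 ≠ e⁻¹ p.2 := fun hc => hp.1 (e⁻¹.injective hc)
      refine ⟨hne, ?_⟩
      have := (h (e⁻¹ p.1) (e⁻¹ p.2) hne).2
      simp only [Equiv.Perm.inv_def, Equiv.apply_symm_apply] at this
      exact this hp.2
    · intro p _; simp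
    · intro p _; simp
  have k1 := two_mul_card_lt S hS
  have k2 := two_mul_card_lt T hT
  omega


/-- On the event `Ee σ τ`, the number of discordant pairs equals the number of inversions
of `τ⁻¹ * σ`. -/
lemma card_discordant {z : Fin n → ℝ × ℝ} {σ τ : Equiv.Perm (Fin n)} (hz : z ∈ Ee σ τ) :
    (Finset.univ.filter fun p : Fin n × Fin n =>
        p.1 < p.2 ∧ ((z p.1).1 - (z p.2).1) * ((z p.1).2 - (z p.2).2) < 0).card
      = inversions (τ⁻¹ * σ) := by
  obtain ⟨hx, hy⟩ := hz
  set π : Equiv.Perm (Fin n) := τ⁻¹ * σ with hπ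
  have happ : ∀ i : Fin n, π (σ⁻¹ i) = τ⁻¹ i := by
    intro i
    simp [hπ, Equiv.Perm.mul_apply]
  have step1 : (Finset.univ.filter fun p : Fin n × Fin n =>
        p.1 < p.2 ∧ ((z p.1).1 - (z p.2).1) * ((z p.1).2 - (z p.2).2) < 0).card
      = (Finset.univ.filter fun p : Fin n × Fin n =>
        p.1 < p.2 ∧ ((p.1 < p.2 ∧ π p.2 < π p.1) ∨ (p.2 < p.1 ∧ π p.1 < π p.2))).card := by
    apply card_transfer
      (fun i j => ((z i).1 - (z j).1) * ((z i).2 - (z j).2) < 0)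
      (fun i j => (i < j ∧ π j < π i) ∨ (j < i ∧ π i < π j)) ?_ ?_ σ⁻¹ ?_
    · intro i j hij
      have : ((z j).1 - (z i).1) * ((z j).2 - (z i).2)
          = ((z i).1 - (z j).1) * ((z i).2 - (z j).2) := by ring
      rw [this]; exact hij
    · intro i j hij; tauto
    · intro i j hij
      have hxiff := lt_iff_perm1 hx i j
      have hxiff' := lt_iff_perm1 hx j i
      have hyiff := lt_iff_perm2 hy i j
      have hyiff' := lt_iff_perm2 hy j i
      show ((z i).1 - (z j).1) * ((z i).2 - (z j).2) < 0 ↔ _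
      rw [mul_neg_iff]
      simp only [sub_pos, sub_neg, happ]
      tauto
  rw [step1, inversions]
  congr 1
  apply Finset.filter_congr
  intro p _
  constructor
  · rintro ⟨hlt, (⟨_, h⟩ | ⟨hgt, _⟩)⟩
    · exact ⟨hlt, h⟩
    · exact absurd hgt (not_lt.2 hlt.le)
  · rintro ⟨hlt, h⟩
    exact ⟨hlt, Or.inl ⟨hlt, h⟩⟩

lemma hamiltonian_on {z : Fin n → ℝ × ℝ} {σ τ : Equiv.Perm (Fin n)} (hz : z ∈ Ee σ τ) :
    hamiltonian n z = ((n : ℝ) - 1)⁻¹ * (inversions (τ⁻¹ * σ) : ℝ) := by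
  rw [hamiltonian]
  congr 1
  rw [← card_discordant hz]
  rw [← Finset.sum_product' (s := Finset.univ) (t := Finset.univ)
    (f := fun i j => if i < j then hInt ((z i).1 - (z j).1, (z i).2 - (z j).2) else 0)]
  rw [Finset.univ_product_univ]
  rw [← Finset.sum_boole]
  apply Finset.sum_congr rfl
  intro p _
  simp only [hInt, ← ite_and]

lemma exp_hamiltonian_on {z : Fin n → ℝ × ℝ} {σ τ : Equiv.Perm (Fin n)} (hz : z ∈ Ee σ τ)
    (β : ℝ) :
    Real.exp (-β * hamiltonian n z)
      = Real.exp (-β / ((n : ℝ) - 1)) ^ inversions (τ⁻¹ * σ) := by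
  rw [hamiltonian_on hz, ← Real.exp_nat_mul]
  congr 1
  ring

/-- `k ≤ lisLength π` iff there is an increasing set of size `k`. -/
lemma le_lisLength_iff (π : Equiv.Perm (Fin n)) {k : ℕ} (hk : 1 ≤ k) :
    k ≤ lisLength π ↔
      ∃ s : Finset (Fin n), s.card = k ∧ ∀ i ∈ s, ∀ j ∈ s, i < j → π i < π j := by
  constructor
  · intro h
    obtain ⟨s, hs, hsup⟩ := Finset.exists_mem_eq_sup (Finset.univ.powerset : Finset (Finset (Fin n)))
      ⟨∅, by simp⟩ (fun s => if ∀ i ∈ s, ∀ j ∈ s, i < j → π i < π j then s.card else 0)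
    rw [lisLength, hsup] at h
    by_cases hmono : ∀ i ∈ s, ∀ j ∈ s, i < j → π i < π j
    · rw [if_pos hmono] at h
      obtain ⟨t, hts, htcard⟩ := Finset.exists_subset_card_eq h
      exact ⟨t, htcard, fun i hi j hj hij => hmono i (hts hi) j (hts hj) hij⟩
    · rw [if_neg hmono] at h
      omega
  · rintro ⟨s, hcard, hmono⟩
    have : k = (if ∀ i ∈ s, ∀ j ∈ s, i < j → π i < π j then s.card else 0) := by
      rw [if_pos hmono, hcard]
    rw [lisLength, this]
    exact Finset.le_sup (f := fun s : Finset (Fin n) =>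
      if ∀ i ∈ s, ∀ j ∈ s, i < j → π i < π j then s.card else 0)
      (Finset.mem_powerset.2 (Finset.subset_univ s))

/-- On `Ee σ τ`, the record event is equivalent to `k ≤ lisLength (τ⁻¹ * σ)`. -/
lemma event_iff {z : Fin n → ℝ × ℝ} {σ τ : Equiv.Perm (Fin n)} (hz : z ∈ Ee σ τ)
    {k : ℕ} (hk : 1 ≤ k) :
    (∃ i : Fin k → Fin n, StrictMono i ∧ ∀ j l : Fin k, j ≠ l →
        0 < ((z (i j)).1 - (z (i l)).1) * ((z (i j)).2 - (z (i l)).2))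
      ↔ k ≤ lisLength (τ⁻¹ * σ) := by
  obtain ⟨hx, hy⟩ := hz
  set π : Equiv.Perm (Fin n) := τ⁻¹ * σ with hπ
  have happ : ∀ i : Fin n, π (σ⁻¹ i) = τ⁻¹ i := by
    intro i; simp [hπ, Equiv.Perm.mul_apply]
  rw [le_lisLength_iff _ hk]
  constructor
  · rintro ⟨i, hi, hconc⟩
    refine ⟨Finset.univ.image (fun j => σ⁻¹ (i j)), ?_, ?_⟩
    · rw [Finset.card_image_of_injective _ (fun a b hab => hi.injective (σ⁻¹.injective hab))]
      simp
    · intro a ha b hb hab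
      simp only [Finset.mem_image, Finset.mem_univ, true_and] at ha hb
      obtain ⟨j, rfl⟩ := ha
      obtain ⟨l, rfl⟩ := hb
      have hjl : j ≠ l := by rintro rfl; exact lt_irrefl _ hab
      have h := hconc j l hjl
      rw [mul_pos_iff] at h
      simp only [sub_pos, sub_neg] at h
      rw [happ, happ]
      rcases h with ⟨h1, h2⟩ | ⟨h1, h2⟩
      · exact absurd ((lt_iff_perm1 hx _ _).1 h1) (not_lt.2 hab.le)
      · exact (lt_iff_perm2 hy _ _).1 h2
  · rintro ⟨s, hcard, hmono⟩
    have htcard : (s.image σ).card = k := by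
      rw [Finset.card_image_of_injective _ σ.injective, hcard]
    refine ⟨fun j => ((s.image σ).orderIsoOfFin htcard j : Fin n), ?_, ?_⟩
    · intro a b hab
      exact Subtype.coe_lt_coe.2 (((s.image σ).orderIsoOfFin htcard).strictMono hab)
    · intro j l hjl
      set u : Fin n := ((s.image σ).orderIsoOfFin htcard j : Fin n) with hu
      set v : Fin n := ((s.image σ).orderIsoOfFin htcard l : Fin n) with hv
      have hus : u ∈ s.image σ := ((s.image σ).orderIsoOfFin htcard j).2
      have hvs : v ∈ s.image σ := ((s.image σ).orderIsoOfFin htcard l).2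
      obtain ⟨a, has, hau⟩ := Finset.mem_image.1 hus
      obtain ⟨b, hbs, hbv⟩ := Finset.mem_image.1 hvs
      have huv : u ≠ v := by
        intro hc
        exact hjl (((s.image σ).orderIsoOfFin htcard).injective (Subtype.coe_injective hc))
      have hab : a ≠ b := by rintro rfl; exact huv (hau ▸ hbv ▸ rfl)
      have hxa : σ⁻¹ u = a := by rw [← hau]; simp
      have hxb : σ⁻¹ v = b := by rw [← hbv]; simp
      rcases hab.lt_or_gt with h | h
      · have hπ := hmono a has b hbs h
        have h1 : (z u).1 < (z v).1 := by
          rw [lt_iff_perm1 hx, hxa, hxb]; exact h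
        have h2 : (z u).2 < (z v).2 := by
          rw [lt_iff_perm2 hy, ← happ u, ← happ v, hxa, hxb]; exact hπ
        exact mul_pos_of_neg_of_neg (by linarith) (by linarith)
      · have hπ := hmono b hbs a has h
        have h1 : (z v).1 < (z u).1 := by
          rw [lt_iff_perm1 hx, hxa, hxb]; exact h
        have h2 : (z v).2 < (z u).2 := by
          rw [lt_iff_perm2 hy, ← happ u, ← happ v, hxa, hxb]; exact hπ
        exact mul_pos (by linarith) (by linarith)



def Fset (σ : Equiv.Perm (Fin n)) : Set (Fin n → ℝ) := {u | StrictMono (u ∘ σ)}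

lemma measurableSet_Fset (σ : Equiv.Perm (Fin n)) : MeasurableSet (Fset σ) := by
  have h : Fset σ = ⋂ (a : Fin n), ⋂ (b : Fin n), {u : Fin n → ℝ | a < b → u (σ a) < u (σ b)} := by
    ext u
    simp only [Fset, mem_setOf_eq, mem_iInter, StrictMono, Function.comp]
  rw [h]
  refine MeasurableSet.iInter fun a => MeasurableSet.iInter fun b => ?_
  by_cases hab : a < b
  · simp only [hab, true_implies]
    exact measurableSet_lt (measurable_pi_apply _) (measurable_pi_apply _)
  · have : {u : Fin n → ℝ | a < b → u (σ a) < u (σ b)} = univ := by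
      ext u; simp [hab]
    rw [this]; exact MeasurableSet.univ

lemma measurableSet_Ee (σ τ : Equiv.Perm (Fin n)) : MeasurableSet (Ee σ τ) := by
  have h : Ee σ τ =
      (⋂ (a : Fin n), ⋂ (b : Fin n), {z : Fin n → ℝ × ℝ | a < b → (z (σ a)).1 < (z (σ b)).1}) ∩
      (⋂ (a : Fin n), ⋂ (b : Fin n), {z : Fin n → ℝ × ℝ | a < b → (z (τ a)).2 < (z (τ b)).2}) := by
    ext z
    simp only [Ee, mem_setOf_eq, mem_inter_iff, mem_iInter, StrictMono]
  rw [h]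
  apply MeasurableSet.inter
  · refine MeasurableSet.iInter fun a => MeasurableSet.iInter fun b => ?_
    by_cases hab : a < b
    · simp only [hab, true_implies]
      exact measurableSet_lt (measurable_pi_apply _).fst (measurable_pi_apply _).fst
    · have : {z : Fin n → ℝ × ℝ | a < b → (z (σ a)).1 < (z (σ b)).1} = univ := by
        ext z; simp [hab]
      rw [this]; exact MeasurableSet.univ
  · refine MeasurableSet.iInter fun a => MeasurableSet.iInter fun b => ?_
    by_cases hab : a < b
    · simp only [hab, true_implies]
      exact measurableSet_lt (measurable_pi_apply _).snd (measurable_pi_apply _).snd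
    · have : {z : Fin n → ℝ × ℝ | a < b → (z (τ a)).2 < (z (τ b)).2} = univ := by
        ext z; simp [hab]
      rw [this]; exact MeasurableSet.univ

lemma Ee_eq_preimage (σ τ : Equiv.Perm (Fin n)) :
    Ee σ τ = (MeasurableEquiv.arrowProdEquivProdArrow ℝ ℝ (Fin n)) ⁻¹' (Fset σ ×ˢ Fset τ) := by
  ext z
  simp only [Ee, Fset, mem_setOf_eq, mem_preimage, mem_prod,
    MeasurableEquiv.arrowProdEquivProdArrow, Equiv.arrowProdEquivProdArrow,
    MeasurableEquiv.coe_mk, Equiv.coe_fn_mk, Function.comp]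
  exact Iff.rfl

/-- Strictly monotone rearrangements are unique. -/
lemma perm_eq_of_strictMono {x : Fin n → ℝ} {σ σ' : Equiv.Perm (Fin n)}
    (h : StrictMono (fun a => x (σ a))) (h' : StrictMono (fun a => x (σ' a))) : σ = σ' := by
  have hinj : Function.Injective x := by
    intro i j hij
    by_contra hne
    have : σ⁻¹ i ≠ σ⁻¹ j := fun hc => hne (by simpa using congrArg σ hc)
    rcases this.lt_or_gt with hlt | hlt
    · exact absurd ((lt_iff_perm h i j).2 hlt) (by rw [hij]; exact lt_irrefl _)
    · exact absurd ((lt_iff_perm h j i).2 hlt) (by rw [hij]; exact lt_irrefl _)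
  have hrange : Set.range (fun a => x (σ a)) = Set.range (fun a => x (σ' a)) := by
    have e1 : Set.range (fun a => x (σ a)) = Set.range x := σ.surjective.range_comp x
    have e2 : Set.range (fun a => x (σ' a)) = Set.range x := σ'.surjective.range_comp x
    rw [e1, e2]
  letI : WellFoundedLT (Fin n) := inferInstance
  have : (fun a => x (σ a)) = (fun a => x (σ' a)) :=
    (StrictMono.range_inj (β := Fin n) (γ := ℝ) h h').1 hrange
  apply Equiv.ext
  intro a
  exact hinj (congrFun this a)

lemma Ee_disjoint : Pairwise fun p p' : Equiv.Perm (Fin n) × Equiv.Perm (Fin n) =>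
    Disjoint (Ee p.1 p.2) (Ee p'.1 p'.2) := by
  intro p p' hne
  rw [Set.disjoint_left]
  intro z hz hz'
  apply hne
  obtain ⟨h1, h2⟩ := hz
  obtain ⟨h1', h2'⟩ := hz'
  exact Prod.ext (perm_eq_of_strictMono (x := fun i => (z i).1) h1 h1')
    (perm_eq_of_strictMono (x := fun i => (z i).2) h2 h2')

/-- The measure of `Fset σ` does not depend on `σ`. -/
lemma pi_Fset_eq (μ : Measure ℝ) [SigmaFinite μ] (σ σ' : Equiv.Perm (Fin n)) :
    Measure.pi (fun _ : Fin n => μ) (Fset σ) = Measure.pi (fun _ : Fin n => μ) (Fset σ') := by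
  suffices H : ∀ ρ : Equiv.Perm (Fin n),
      Measure.pi (fun _ : Fin n => μ) (Fset ρ) = Measure.pi (fun _ : Fin n => μ) (Fset 1) by
    rw [H σ, H σ']
  intro ρ
  set f : Fin n ≃ Fin n := (ρ : Fin n ≃ Fin n).symm with hf
  have hmp : MeasurePreserving (MeasurableEquiv.piCongrLeft (fun _ : Fin n => ℝ) f)
      (Measure.pi fun _ : Fin n => μ) (Measure.pi fun _ : Fin n => μ) :=
    measurePreserving_piCongrLeft (fun _ : Fin n => μ) f
  have hT : ∀ (u : Fin n → ℝ) (j : Fin n),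
      (MeasurableEquiv.piCongrLeft (fun _ : Fin n => ℝ) f) u j = u (f.symm j) := by
    intro u j
    conv_lhs => rw [← Equiv.apply_symm_apply f j]
    rw [MeasurableEquiv.piCongrLeft_apply_apply]
  have hpre : (MeasurableEquiv.piCongrLeft (fun _ : Fin n => ℝ) f) ⁻¹' (Fset 1) = Fset ρ := by
    ext u
    simp only [mem_preimage, Fset, mem_setOf_eq]
    have hfun : ((MeasurableEquiv.piCongrLeft (fun _ : Fin n => ℝ) f) u) ∘ ⇑(1 : Equiv.Perm (Fin n))
        = u ∘ ⇑ρ := by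
      funext j
      simp only [Function.comp, Equiv.Perm.coe_one, id_eq]
      rw [hT]
      simp [hf]
    rw [hfun]
  calc Measure.pi (fun _ : Fin n => μ) (Fset ρ)
      = Measure.pi (fun _ : Fin n => μ)
        ((MeasurableEquiv.piCongrLeft (fun _ : Fin n => ℝ) f) ⁻¹' (Fset 1)) := by rw [hpre]
    _ = Measure.pi (fun _ : Fin n => μ) (Fset 1) :=
        hmp.measure_preimage (measurableSet_Fset 1).nullMeasurableSet

section NullCover

variable (lam kap : Measure ℝ) [IsProbabilityMeasure lam] [IsProbabilityMeasure kap]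

lemma eval_pair_map {i j : Fin n} (hij : i ≠ j) :
    Measure.map (fun z : Fin n → ℝ × ℝ => (z i, z j))
        (Measure.pi fun _ : Fin n => lam.prod kap)
      = (lam.prod kap).prod (lam.prod kap) := by
  refine (Measure.prod_eq fun s t hs ht => ?_).symm
  rw [Measure.map_apply ((measurable_pi_apply i).prodMk (measurable_pi_apply j)) (hs.prod ht)]
  have hpre : (fun z : Fin n → ℝ × ℝ => (z i, z j)) ⁻¹' (s ×ˢ t)
      = Set.pi Set.univ (fun l => if l = i then s else if l = j then t else Set.univ) := by
    ext z
    simp only [mem_preimage, mem_prod, Set.mem_pi, Set.mem_univ, true_implies]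
    constructor
    · rintro ⟨h1, h2⟩ l
      by_cases hli : l = i
      · subst hli; rw [if_pos rfl]; exact h1
      · rw [if_neg hli]
        by_cases hlj : l = j
        · subst hlj; rw [if_pos rfl]; exact h2
        · rw [if_neg hlj]; trivial
    · intro h
      constructor
      · have := h i; rwa [if_pos rfl] at this
      · have := h j; rwa [if_neg (Ne.symm hij), if_pos rfl] at this
  rw [hpre, Measure.pi_pi]
  have hprod : ∀ l : Fin n, (lam.prod kap) (if l = i then s else if l = j then t else Set.univ)
      = if l = i then (lam.prod kap) s else if l = j then (lam.prod kap) t else 1 := by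
    intro l
    by_cases hli : l = i
    · simp [hli]
    · by_cases hlj : l = j <;> simp [hli, hlj, Ne.symm hij]
  simp only [hprod]
  have hoff : ∀ x ∈ (Finset.univ : Finset (Fin n)), x ∉ ({i, j} : Finset (Fin n)) →
      (if x = i then (lam.prod kap) s else if x = j then (lam.prod kap) t else 1) = 1 := by
    intro x _ hx
    simp only [Finset.mem_insert, Finset.mem_singleton] at hx
    push_neg at hx
    rw [if_neg hx.1, if_neg hx.2]
  rw [← Finset.prod_subset (Finset.subset_univ ({i, j} : Finset (Fin n))) hoff,
    Finset.prod_pair hij]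
  simp [Ne.symm hij]

lemma null_eq_fst (hlam0 : ∀ x : ℝ, lam {x} = 0) {i j : Fin n} (hij : i ≠ j) :
    (Measure.pi fun _ : Fin n => lam.prod kap) {z : Fin n → ℝ × ℝ | (z i).1 = (z j).1} = 0 := by
  have hS : MeasurableSet {p : (ℝ × ℝ) × (ℝ × ℝ) | p.1.1 = p.2.1} :=
    measurableSet_eq_fun (measurable_fst.fst) (measurable_snd.fst)
  have hpre : {z : Fin n → ℝ × ℝ | (z i).1 = (z j).1}
      = (fun z : Fin n → ℝ × ℝ => (z i, z j)) ⁻¹' {p : (ℝ × ℝ) × (ℝ × ℝ) | p.1.1 = p.2.1} := rfl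
  rw [hpre, ← Measure.map_apply ((measurable_pi_apply i).prodMk (measurable_pi_apply j)) hS,
    eval_pair_map lam kap hij, Measure.prod_apply hS]
  have hsec : ∀ a : ℝ × ℝ,
      (lam.prod kap) (Prod.mk a ⁻¹' {p : (ℝ × ℝ) × (ℝ × ℝ) | p.1.1 = p.2.1}) = 0 := by
    intro a
    have : Prod.mk a ⁻¹' {p : (ℝ × ℝ) × (ℝ × ℝ) | p.1.1 = p.2.1} = {a.1} ×ˢ (Set.univ : Set ℝ) := by
      ext b
      simp only [mem_preimage, mem_setOf_eq, mem_prod, mem_singleton_iff, mem_univ, and_true]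
      exact eq_comm
    rw [this, Measure.prod_prod, hlam0 a.1, zero_mul]
  simp only [hsec]
  simp

lemma null_eq_snd (hkap0 : ∀ y : ℝ, kap {y} = 0) {i j : Fin n} (hij : i ≠ j) :
    (Measure.pi fun _ : Fin n => lam.prod kap) {z : Fin n → ℝ × ℝ | (z i).2 = (z j).2} = 0 := by
  have hS : MeasurableSet {p : (ℝ × ℝ) × (ℝ × ℝ) | p.1.2 = p.2.2} :=
    measurableSet_eq_fun (measurable_fst.snd) (measurable_snd.snd)
  have hpre : {z : Fin n → ℝ × ℝ | (z i).2 = (z j).2}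
      = (fun z : Fin n → ℝ × ℝ => (z i, z j)) ⁻¹' {p : (ℝ × ℝ) × (ℝ × ℝ) | p.1.2 = p.2.2} := rfl
  rw [hpre, ← Measure.map_apply ((measurable_pi_apply i).prodMk (measurable_pi_apply j)) hS,
    eval_pair_map lam kap hij, Measure.prod_apply hS]
  have hsec : ∀ a : ℝ × ℝ,
      (lam.prod kap) (Prod.mk a ⁻¹' {p : (ℝ × ℝ) × (ℝ × ℝ) | p.1.2 = p.2.2}) = 0 := by
    intro a
    have : Prod.mk a ⁻¹' {p : (ℝ × ℝ) × (ℝ × ℝ) | p.1.2 = p.2.2} = (Set.univ : Set ℝ) ×ˢ {a.2} := by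
      ext b
      simp only [mem_preimage, mem_setOf_eq, mem_prod, mem_singleton_iff, mem_univ, true_and]
      exact eq_comm
    rw [this, Measure.prod_prod, hkap0 a.2, mul_zero]
  simp only [hsec]
  simp

/-- Almost every configuration lies in some `Ee σ τ`. -/
lemma compl_iUnion_Ee_null (hlam0 : ∀ x : ℝ, lam {x} = 0) (hkap0 : ∀ y : ℝ, kap {y} = 0) :
    (Measure.pi fun _ : Fin n => lam.prod kap)
      (⋃ p : Equiv.Perm (Fin n) × Equiv.Perm (Fin n), Ee p.1 p.2)ᶜ = 0 := by
  have hVnull : (Measure.pi fun _ : Fin n => lam.prod kap) (⋃ (p : Fin n × Fin n) (_ : p.1 ≠ p.2),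
      ({z : Fin n → ℝ × ℝ | (z p.1).1 = (z p.2).1}
        ∪ {z : Fin n → ℝ × ℝ | (z p.1).2 = (z p.2).2})) = 0 := by
    apply measure_iUnion_null
    intro p
    apply measure_iUnion_null
    intro hne
    exact measure_union_null (null_eq_fst lam kap hlam0 hne) (null_eq_snd lam kap hkap0 hne)
  refine measure_mono_null ?_ hVnull
  · intro z hz
    simp only [mem_compl_iff, mem_iUnion, not_exists] at hz
    by_contra hzv
    simp only [mem_iUnion, mem_union, mem_setOf_eq, not_exists] at hzv
    push_neg at hzv
    have hxinj : Function.Injective (fun i => (z i).1) := by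
      intro i j hij
      by_contra hne
      exact (hzv (i, j) hne).1 hij
    have hyinj : Function.Injective (fun i => (z i).2) := by
      intro i j hij
      by_contra hne
      exact (hzv (i, j) hne).2 hij
    set σ : Equiv.Perm (Fin n) := Tuple.sort (fun i => (z i).1) with hσ
    set τ : Equiv.Perm (Fin n) := Tuple.sort (fun i => (z i).2) with hτ
    apply hz (σ, τ)
    constructor
    · exact (Tuple.monotone_sort (fun i => (z i).1)).strictMono_of_injective
        (hxinj.comp σ.injective)
    · exact (Tuple.monotone_sort (fun i => (z i).2)).strictMono_of_injective
        (hyinj.comp τ.injective)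

end NullCover


lemma measurableSet_event (k : ℕ) :
    MeasurableSet {z : Fin n → ℝ × ℝ | ∃ i : Fin k → Fin n, StrictMono i ∧ ∀ j l : Fin k, j ≠ l →
      0 < ((z (i j)).1 - (z (i l)).1) * ((z (i j)).2 - (z (i l)).2)} := by
  have h : {z : Fin n → ℝ × ℝ | ∃ i : Fin k → Fin n, StrictMono i ∧ ∀ j l : Fin k, j ≠ l →
        0 < ((z (i j)).1 - (z (i l)).1) * ((z (i j)).2 - (z (i l)).2)}
      = ⋃ (i : Fin k → Fin n), ⋃ (_ : StrictMono i), ⋂ (j : Fin k), ⋂ (l : Fin k),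
        {z : Fin n → ℝ × ℝ | j ≠ l →
          0 < ((z (i j)).1 - (z (i l)).1) * ((z (i j)).2 - (z (i l)).2)} := by
    ext z
    simp only [mem_setOf_eq, mem_iUnion, mem_iInter, exists_prop]
  rw [h]
  refine MeasurableSet.iUnion fun i => MeasurableSet.iUnion fun _ =>
    MeasurableSet.iInter fun j => MeasurableSet.iInter fun l => ?_
  by_cases hjl : j = l
  · have : {z : Fin n → ℝ × ℝ | j ≠ l →
        0 < ((z (i j)).1 - (z (i l)).1) * ((z (i j)).2 - (z (i l)).2)} = univ := by
      ext z; simp [hjl]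
    rw [this]; exact MeasurableSet.univ
  · have : {z : Fin n → ℝ × ℝ | j ≠ l →
        0 < ((z (i j)).1 - (z (i l)).1) * ((z (i j)).2 - (z (i l)).2)}
        = {z : Fin n → ℝ × ℝ |
          0 < ((z (i j)).1 - (z (i l)).1) * ((z (i j)).2 - (z (i l)).2)} := by
      ext z; simp [hjl]
    rw [this]
    exact measurableSet_lt measurable_const
      (((measurable_pi_apply _).fst.sub (measurable_pi_apply _).fst).mul
        ((measurable_pi_apply _).snd.sub (measurable_pi_apply _).snd))

lemma measurable_hamiltonian : Measurable (hamiltonian n) := by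
  unfold hamiltonian
  apply Measurable.const_mul
  apply Finset.measurable_sum
  intro i _
  apply Finset.measurable_sum
  intro j _
  by_cases h : i < j
  · simp only [if_pos h]
    unfold hInt
    have hm : Measurable fun z : Fin n → ℝ × ℝ =>
        ((z i).1 - (z j).1) * ((z i).2 - (z j).2) :=
      ((measurable_pi_apply i).fst.sub (measurable_pi_apply j).fst).mul
        ((measurable_pi_apply i).snd.sub (measurable_pi_apply j).snd)
    exact Measurable.ite (measurableSet_lt hm measurable_const) measurable_const measurable_const
  · simp only [if_neg h]
    exact measurable_const

lemma sum_pairs {M : Type*} [AddCommMonoid M] (F : Equiv.Perm (Fin n) → M) :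
    ∑ p : Equiv.Perm (Fin n) × Equiv.Perm (Fin n), F (p.2⁻¹ * p.1)
      = n.factorial • ∑ π : Equiv.Perm (Fin n), F π := by
  rw [Fintype.sum_prod_type]
  rw [Finset.sum_comm]
  have hin : ∀ τ : Equiv.Perm (Fin n),
      (∑ σ : Equiv.Perm (Fin n), F (τ⁻¹ * σ)) = ∑ π : Equiv.Perm (Fin n), F π := by
    intro τ
    exact Fintype.sum_equiv (Equiv.mulLeft τ⁻¹) _ _ (fun σ => rfl)
  simp only [hin]
  rw [Finset.sum_const, Finset.card_univ, Fintype.card_perm, Fintype.card_fin]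

end GM

/-- The Boltzmann–Gibbs probability that the configuration contains `k` points forming an
"increasing subsequence" equals the Mallows(n, e^{-β/(n-1)}) probability that the longest
increasing subsequence has length at least `k`. -/
theorem gibbs_record_eq_mallows_lis (lam kap : Measure ℝ)
    (hlamP : IsProbabilityMeasure lam) (hkapP : IsProbabilityMeasure kap)
    (hlam : ∀ x : ℝ, lam {x} = 0) (hkap : ∀ y : ℝ, kap {y} = 0)
    (β : ℝ) (n : ℕ) (hn : 2 ≤ n) (k : ℕ) (hk1 : 1 ≤ k) (hkn : k ≤ n) :
    gibbs n (lam.prod kap) β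
        {z : Fin n → ℝ × ℝ | ∃ i : Fin k → Fin n, StrictMono i ∧
          ∀ j l : Fin k, j ≠ l →
            0 < ((z (i j)).1 - (z (i l)).1) * ((z (i j)).2 - (z (i l)).2)}
      = ENNReal.ofReal
          (mallowsProb n (Real.exp (-β / ((n : ℝ) - 1))) {π | k ≤ lisLength π}) := by
  classical
  haveI := hlamP
  haveI := hkapP
  set q : ℝ := Real.exp (-β / ((n : ℝ) - 1)) with hq
  set Λ : Measure (Fin n → ℝ × ℝ) := Measure.pi fun _ : Fin n => lam.prod kap with hΛ
  haveI : IsProbabilityMeasure (lam.prod kap) := by infer_instance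
  haveI : IsProbabilityMeasure Λ := by rw [hΛ]; infer_instance
  set Z : ℝ := gibbsZ n (lam.prod kap) β with hZdef
  set A : Set (Fin n → ℝ × ℝ) := {z | ∃ i : Fin k → Fin n, StrictMono i ∧
    ∀ j l : Fin k, j ≠ l →
      0 < ((z (i j)).1 - (z (i l)).1) * ((z (i j)).2 - (z (i l)).2)} with hA
  have hAmeas : MeasurableSet A := GM.measurableSet_event k
  have hEmeas : ∀ p : Equiv.Perm (Fin n) × Equiv.Perm (Fin n), MeasurableSet (GM.Ee p.1 p.2) :=
    fun p => GM.measurableSet_Ee p.1 p.2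
  have hdisj : Pairwise (Function.onFun Disjoint
      fun p : Equiv.Perm (Fin n) × Equiv.Perm (Fin n) => GM.Ee p.1 p.2) := GM.Ee_disjoint
  set U : Set (Fin n → ℝ × ℝ) :=
    ⋃ p : Equiv.Perm (Fin n) × Equiv.Perm (Fin n), GM.Ee p.1 p.2 with hU
  have hUmeas : MeasurableSet U := MeasurableSet.iUnion fun p => hEmeas p
  have hUc : Λ Uᶜ = 0 := GM.compl_iUnion_Ee_null lam kap hlam hkap
  have hU1 : Λ U = 1 := (prob_compl_eq_zero_iff hUmeas).1 hUc
  set c : ℝ≥0∞ := Λ (GM.Ee 1 1) with hc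
  have hceq : ∀ p : Equiv.Perm (Fin n) × Equiv.Perm (Fin n), Λ (GM.Ee p.1 p.2) = c := by
    intro p
    have hsplit : ∀ σ τ : Equiv.Perm (Fin n), Λ (GM.Ee σ τ)
        = (Measure.pi fun _ : Fin n => lam) (GM.Fset σ)
          * (Measure.pi fun _ : Fin n => kap) (GM.Fset τ) := by
      intro σ τ
      rw [hΛ, GM.Ee_eq_preimage,
        (measurePreserving_arrowProdEquivProdArrow ℝ ℝ (Fin n)
            (fun _ => lam) (fun _ => kap)).measure_preimage
          ((GM.measurableSet_Fset σ).prod (GM.measurableSet_Fset τ)).nullMeasurableSet,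
        Measure.prod_prod]
    rw [hc, hsplit p.1 p.2, hsplit 1 1, GM.pi_Fset_eq lam p.1 1, GM.pi_Fset_eq kap p.2 1]
  set N : ℕ := n.factorial * n.factorial with hN
  have hsum : (N : ℝ≥0∞) * c = 1 := by
    calc (N : ℝ≥0∞) * c
        = ∑' p : Equiv.Perm (Fin n) × Equiv.Perm (Fin n), Λ (GM.Ee p.1 p.2) := by
          rw [tsum_fintype]
          simp only [hceq]
          rw [Finset.sum_const, Finset.card_univ, Fintype.card_prod, Fintype.card_perm,
            Fintype.card_fin, nsmul_eq_mul, hN]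
      _ = Λ U := (measure_iUnion hdisj hEmeas).symm
      _ = 1 := hU1
  have hNpos : 0 < N := by
    rw [hN]; exact Nat.mul_pos n.factorial_pos n.factorial_pos
  have hN0 : (N : ℝ≥0∞) ≠ 0 := Nat.cast_ne_zero.2 hNpos.ne'
  have hNtop : (N : ℝ≥0∞) ≠ ⊤ := ENNReal.natCast_ne_top N
  have hcval : c = (N : ℝ≥0∞)⁻¹ := by
    calc c = (N : ℝ≥0∞)⁻¹ * ((N : ℝ≥0∞) * c) := by
          rw [← mul_assoc, ENNReal.inv_mul_cancel hN0 hNtop, one_mul]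
      _ = (N : ℝ≥0∞)⁻¹ := by rw [hsum, mul_one]
  set cr : ℝ := ((N : ℝ))⁻¹ with hcr
  have hcr_pos : 0 < cr := by
    rw [hcr]
    have : (0 : ℝ) < N := by exact_mod_cast hNpos
    positivity
  have hofc : ENNReal.ofReal cr = c := by
    rw [hcr, hcval, ENNReal.ofReal_inv_of_pos (by exact_mod_cast hNpos), ENNReal.ofReal_natCast]
  have hcrtoReal : c.toReal = cr := by
    rw [hcval, hcr, ENNReal.toReal_inv]
    simp
  -- pointwise identification on U
  have hptwise : ∀ z ∈ U, Real.exp (-β * hamiltonian n z)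
      = ∑ p : Equiv.Perm (Fin n) × Equiv.Perm (Fin n),
          Set.indicator (GM.Ee p.1 p.2) (fun _ => q ^ inversions (p.2⁻¹ * p.1)) z := by
    intro z hzU
    obtain ⟨p0, hp0⟩ := Set.mem_iUnion.1 hzU
    rw [GM.exp_hamiltonian_on hp0 β, ← hq]
    rw [Finset.sum_eq_single p0]
    · rw [Set.indicator_of_mem hp0]
    · intro p _ hne
      rw [Set.indicator_of_notMem]
      intro hzp
      exact Set.disjoint_left.1 (hdisj hne) hzp hp0
    · intro hmem
      exact absurd (Finset.mem_univ p0) hmem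
  have hae : (fun z => Real.exp (-β * hamiltonian n z))
      =ᵐ[Λ] (fun z => ∑ p : Equiv.Perm (Fin n) × Equiv.Perm (Fin n),
          Set.indicator (GM.Ee p.1 p.2) (fun _ => q ^ inversions (p.2⁻¹ * p.1)) z) := by
    have hsub : {z : Fin n → ℝ × ℝ | ¬ (Real.exp (-β * hamiltonian n z)
        = ∑ p : Equiv.Perm (Fin n) × Equiv.Perm (Fin n),
          Set.indicator (GM.Ee p.1 p.2) (fun _ => q ^ inversions (p.2⁻¹ * p.1)) z)} ⊆ Uᶜ :=
      fun z hz hzU => hz (hptwise z hzU)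
    exact MeasureTheory.ae_iff.2 (measure_mono_null hsub hUc)
  have hZ : Z = (n.factorial : ℝ) * (∑ π : Equiv.Perm (Fin n), q ^ inversions π) * cr := by
    have h1 : Z = ∫ z, (∑ p : Equiv.Perm (Fin n) × Equiv.Perm (Fin n),
        Set.indicator (GM.Ee p.1 p.2) (fun _ => q ^ inversions (p.2⁻¹ * p.1)) z) ∂Λ := by
      rw [hZdef]
      have : gibbsZ n (lam.prod kap) β
          = ∫ z, Real.exp (-β * hamiltonian n z) ∂Λ := rfl
      rw [this]
      exact integral_congr_ae hae
    rw [h1, integral_finset_sum _ (fun p _ =>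
      (integrable_indicator_iff (hEmeas p)).2
        (integrableOn_const (measure_lt_top Λ _).ne))]
    have h2 : ∀ p : Equiv.Perm (Fin n) × Equiv.Perm (Fin n),
        ∫ z, Set.indicator (GM.Ee p.1 p.2) (fun _ => q ^ inversions (p.2⁻¹ * p.1)) z ∂Λ
          = cr * q ^ inversions (p.2⁻¹ * p.1) := by
      intro p
      rw [integral_indicator_const _ (hEmeas p), Measure.real, hceq p, hcrtoReal, smul_eq_mul]
    simp only [h2]
    rw [← Finset.mul_sum, GM.sum_pairs (fun π => q ^ inversions π), nsmul_eq_mul]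
    ring
  have hSpos : 0 < ∑ π : Equiv.Perm (Fin n), q ^ inversions π :=
    Finset.sum_pos (fun π _ => pow_pos (Real.exp_pos _) _) ⟨1, Finset.mem_univ 1⟩
  have hZpos : 0 < Z := by
    rw [hZ]
    have hf : (0 : ℝ) < (n.factorial : ℝ) := by exact_mod_cast n.factorial_pos
    exact mul_pos (mul_pos hf hSpos) hcr_pos
  -- compute the Gibbs probability
  have hgibbs : gibbs n (lam.prod kap) β A
      = ∫⁻ z in A, ENNReal.ofReal (Real.exp (-β * hamiltonian n z) / Z) ∂Λ := by
    have : gibbs n (lam.prod kap) β = Λ.withDensity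
        (fun z => ENNReal.ofReal (Real.exp (-β * hamiltonian n z) / Z)) := rfl
    rw [this, withDensity_apply _ hAmeas]
  have hAU : A =ᵐ[Λ] ((A ∩ U : Set (Fin n → ℝ × ℝ))) := by
    rw [MeasureTheory.ae_eq_set]
    constructor
    · exact measure_mono_null (fun z hz hzU => hz.2 ⟨hz.1, hzU⟩) hUc
    · have hempty : (A ∩ U) \ A = ∅ := by
        ext z
        simp only [Set.mem_diff, Set.mem_inter_iff, Set.mem_empty_iff_false, iff_false]
        rintro ⟨⟨hzA, _⟩, hz2⟩
        exact hz2 hzA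
      rw [hempty]
      exact measure_empty
  have hLHS : gibbs n (lam.prod kap) β A
      = ∑ p : Equiv.Perm (Fin n) × Equiv.Perm (Fin n),
          (if k ≤ lisLength (p.2⁻¹ * p.1)
            then ENNReal.ofReal (q ^ inversions (p.2⁻¹ * p.1) / Z) * c else 0) := by
    rw [hgibbs, setLIntegral_congr hAU]
    have hAU2 : A ∩ U = ⋃ p : Equiv.Perm (Fin n) × Equiv.Perm (Fin n), (A ∩ GM.Ee p.1 p.2) :=
      Set.inter_iUnion _ _
    rw [hAU2, lintegral_iUnion (fun p => hAmeas.inter (hEmeas p))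
      (fun p p' hne => ((hdisj hne).mono Set.inter_subset_right Set.inter_subset_right)),
      tsum_fintype]
    apply Finset.sum_congr rfl
    intro p _
    by_cases hlis : k ≤ lisLength (p.2⁻¹ * p.1)
    · rw [if_pos hlis]
      have hAE : A ∩ GM.Ee p.1 p.2 = GM.Ee p.1 p.2 :=
        Set.inter_eq_right.2 (fun z hz => (GM.event_iff hz hk1).2 hlis)
      rw [hAE, setLIntegral_congr_fun (hEmeas p)
        (fun z hz => by
          rw [GM.exp_hamiltonian_on hz β, ← hq]),
        setLIntegral_const, hceq p]
    · rw [if_neg hlis]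
      have hAE : A ∩ GM.Ee p.1 p.2 = ∅ := by
        ext z
        simp only [Set.mem_inter_iff, Set.mem_empty_iff_false, iff_false, not_and]
        intro hzA hzE
        exact hlis ((GM.event_iff hzE hk1).1 hzA)
      rw [hAE]
      exact setLIntegral_empty _
  -- convert to a single ofReal
  have hterm : ∀ p : Equiv.Perm (Fin n) × Equiv.Perm (Fin n),
      (if k ≤ lisLength (p.2⁻¹ * p.1)
        then ENNReal.ofReal (q ^ inversions (p.2⁻¹ * p.1) / Z) * c else 0)
      = ENNReal.ofReal
          (if k ≤ lisLength (p.2⁻¹ * p.1) then q ^ inversions (p.2⁻¹ * p.1) / Z * cr else 0) := by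
    intro p
    by_cases h : k ≤ lisLength (p.2⁻¹ * p.1)
    · rw [if_pos h, if_pos h, ← hofc,
        ← ENNReal.ofReal_mul (div_nonneg (pow_nonneg (Real.exp_pos _).le _) hZpos.le)]
    · rw [if_neg h, if_neg h, ENNReal.ofReal_zero]
  rw [hLHS]
  simp only [hterm]
  rw [← ENNReal.ofReal_sum_of_nonneg (fun p _ => by
    by_cases h : k ≤ lisLength (p.2⁻¹ * p.1)
    · rw [if_pos h]
      exact mul_nonneg (div_nonneg (pow_nonneg (Real.exp_pos _).le _) hZpos.le) hcr_pos.le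
    · rw [if_neg h])]
  congr 1
  rw [GM.sum_pairs (fun π => if k ≤ lisLength π then q ^ inversions π / Z * cr else 0),
    nsmul_eq_mul, mallowsProb]
  have hnum : ∑ π : Equiv.Perm (Fin n),
      Set.indicator {π : Equiv.Perm (Fin n) | k ≤ lisLength π} (fun π => q ^ inversions π) π
      = ∑ π : Equiv.Perm (Fin n), (if k ≤ lisLength π then q ^ inversions π else 0) :=
    Finset.sum_congr rfl fun π _ => by
      rw [Set.indicator_apply]
      simp only [Set.mem_setOf_eq]
  rw [hnum]
  have hfact : ∑ π : Equiv.Perm (Fin n),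
      (if k ≤ lisLength π then q ^ inversions π / Z * cr else 0)
      = (∑ π : Equiv.Perm (Fin n), if k ≤ lisLength π then q ^ inversions π else 0)
        * (cr / Z) := by
    rw [Finset.sum_mul]
    refine Finset.sum_congr rfl fun π _ => ?_
    by_cases h : k ≤ lisLength π
    · rw [if_pos h, if_pos h]; ring
    · rw [if_neg h, if_neg h, zero_mul]
  rw [hfact, hZ]
  have hfne : ((n.factorial : ℝ)) ≠ 0 := by exact_mod_cast n.factorial_pos.ne'
  field_simp
end

section
/- Let u and v be nonnegative continuous functions on the box [a_1,a_2]×[b_1,b_2] and let P ∈ Π_n be any monotone partition of the box. Then |J̃(u,P) − J̃(v,P)| ≤ ‖u − v‖^{1/2} (a_2 − a_1 + b_2 − b_1), where ‖·‖ denotes the supremum norm on the box. -/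
open MeasureTheory

/-- A monotone partition `P ∈ Π_n` of the box `[a1,a2]×[b1,b2]`:
`a1 = x_0 ≤ … ≤ x_n = a2` and `b1 = y_0 ≤ … ≤ y_n = b2`. -/
def IsPartition (a1 a2 b1 b2 : ℝ) (n : ℕ) (x y : Fin (n + 1) → ℝ) : Prop :=
  Monotone x ∧ Monotone y ∧ x 0 = a1 ∧ y 0 = b1 ∧ x (Fin.last n) = a2 ∧ y (Fin.last n) = b2

/-- `J̃(u,P) = 2 Σ_k (∫_{x_k}^{x_{k+1}} ∫_{y_k}^{y_{k+1}} u(x,y) dx dy)^{1/2}`. -/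
noncomputable def Jpart (u : ℝ × ℝ → ℝ) (n : ℕ) (x y : Fin (n + 1) → ℝ) : ℝ :=
  2 * ∑ k : Fin n,
    Real.sqrt (∫ s in (x k.castSucc)..(x k.succ), ∫ t in (y k.castSucc)..(y k.succ), u (s, t))

lemma abs_sqrt_sub_sqrt_le (a b : ℝ) : |Real.sqrt a - Real.sqrt b| ≤ Real.sqrt |a - b| := by
  wlog h : b ≤ a generalizing a b
  · rw [abs_sub_comm, abs_sub_comm a b]; exact this b a (le_of_not_ge h)
  rw [abs_of_nonneg (sub_nonneg.2 (Real.sqrt_le_sqrt h)), abs_of_nonneg (sub_nonneg.2 h)]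
  rcases le_or_gt a 0 with ha | ha
  · rw [Real.sqrt_eq_zero'.2 ha, Real.sqrt_eq_zero'.2 (h.trans ha)]
    simpa using Real.sqrt_nonneg (a - b)
  rcases le_or_gt b 0 with hb | hb
  · rw [Real.sqrt_eq_zero'.2 hb, sub_zero]
    exact Real.sqrt_le_sqrt (by linarith)
  · have hp := Real.sq_sqrt ha.le
    have hq := Real.sq_sqrt hb.le
    have hr := Real.sq_sqrt (sub_nonneg.2 h)
    nlinarith [Real.sqrt_nonneg a, Real.sqrt_nonneg b, Real.sqrt_nonneg (a - b),
      sq_nonneg (Real.sqrt b + Real.sqrt (a - b) - Real.sqrt a),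
      mul_nonneg (Real.sqrt_nonneg b) (Real.sqrt_nonneg (a - b))]

lemma telescope (n : ℕ) (z : Fin (n + 1) → ℝ) :
    ∑ k : Fin n, (z k.succ - z k.castSucc) = z (Fin.last n) - z 0 := by
  set f : ℕ → ℝ := fun i => z ⟨min i n, Nat.lt_succ_of_le (min_le_right _ _)⟩ with hf
  have h1 : ∑ k : Fin n, (z k.succ - z k.castSucc)
      = ∑ i ∈ Finset.range n, (f (i + 1) - f i) := by
    rw [← Fin.sum_univ_eq_sum_range (fun i => f (i + 1) - f i) n]
    refine Finset.sum_congr rfl fun k _ => ?_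
    have hk : (k : ℕ) < n := k.isLt
    have h2 : f ((k : ℕ) + 1) = z k.succ := by
      show z _ = z _; congr 1; apply Fin.ext
      simp only [Fin.val_succ]; omega
    have h3 : f (k : ℕ) = z k.castSucc := by
      show z _ = z _; congr 1; apply Fin.ext
      simp only [Fin.coe_castSucc]; omega
    rw [h2, h3]
  rw [h1, Finset.sum_range_sub f n]
  have hfn : f n = z (Fin.last n) := by
    show z _ = z _; congr 1; apply Fin.ext
    simp only [Fin.val_last]; omega
  have h0 : f 0 = z 0 := by
    show z _ = z _; congr 1
  rw [hfn, h0]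

/-- Continuity estimate: `|J̃(u,P) - J̃(v,P)| ≤ ‖u-v‖^{1/2} (a2-a1+b2-b1)`, where `‖·‖` is
the supremum norm on the box. -/
theorem Jpart_continuity (a1 a2 b1 b2 : ℝ) (ha : a1 ≤ a2) (hb : b1 ≤ b2)
    (u v : ℝ × ℝ → ℝ)
    (hu : ContinuousOn u (Set.Icc (a1, b1) (a2, b2)))
    (hv : ContinuousOn v (Set.Icc (a1, b1) (a2, b2)))
    (hu0 : ∀ p ∈ Set.Icc (a1, b1) (a2, b2), 0 ≤ u p)
    (hv0 : ∀ p ∈ Set.Icc (a1, b1) (a2, b2), 0 ≤ v p)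
    (n : ℕ) (x y : Fin (n + 1) → ℝ) (hP : IsPartition a1 a2 b1 b2 n x y) :
    |Jpart u n x y - Jpart v n x y| ≤
      Real.sqrt (sSup ((fun p => |u p - v p|) '' Set.Icc (a1, b1) (a2, b2))) *
        (a2 - a1 + b2 - b1) := by
  obtain ⟨hx, hy, hx0, hy0, hxl, hyl⟩ := hP
  set S := Set.Icc (a1, b1) (a2, b2) with hS
  set M := sSup ((fun p => |u p - v p|) '' S) with hM
  have hScl : IsClosed S := isClosed_Icc
  have hbdd : BddAbove ((fun p => |u p - v p|) '' S) :=
    (isCompact_Icc.image_of_continuousOn ((hu.sub hv).abs)).bddAbove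
  have hMle : ∀ p ∈ S, |u p - v p| ≤ M := fun p hp => le_csSup hbdd ⟨p, hp, rfl⟩
  have hmem0 : ((a1, b1) : ℝ × ℝ) ∈ S := Set.left_mem_Icc.2 ⟨ha, hb⟩
  have hM0 : 0 ≤ M := le_trans (abs_nonneg _) (hMle (a1, b1) hmem0)
  -- Tietze extensions
  obtain ⟨U, hU⟩ := ContinuousMap.exists_restrict_eq (X := ℝ × ℝ) hScl ⟨_, hu.restrict⟩
  obtain ⟨V, hV⟩ := ContinuousMap.exists_restrict_eq (X := ℝ × ℝ) hScl ⟨_, hv.restrict⟩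
  have hUeq : ∀ p ∈ S, U p = u p := fun p hp => by
    have := congrFun (congrArg DFunLike.coe hU) ⟨p, hp⟩; simpa using this
  have hVeq : ∀ p ∈ S, V p = v p := fun p hp => by
    have := congrFun (congrArg DFunLike.coe hV) ⟨p, hp⟩; simpa using this
  -- per-rectangle estimate
  have key : ∀ k : Fin n,
      |Real.sqrt (∫ s in (x k.castSucc)..(x k.succ), ∫ t in (y k.castSucc)..(y k.succ), u (s, t))
        - Real.sqrt (∫ s in (x k.castSucc)..(x k.succ), ∫ t in (y k.castSucc)..(y k.succ),
            v (s, t))|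
      ≤ Real.sqrt M *
          ((x k.succ - x k.castSucc) + (y k.succ - y k.castSucc)) / 2 := by
    intro k
    set c := x k.castSucc with hc
    set d := x k.succ with hd
    set e := y k.castSucc with he
    set g := y k.succ with hg
    have hcd : c ≤ d := hx (Fin.castSucc_le_succ k)
    have heg : e ≤ g := hy (Fin.castSucc_le_succ k)
    have hsub : ∀ {s t : ℝ}, s ∈ Set.uIcc c d → t ∈ Set.uIcc e g → (s, t) ∈ S := by
      intro s t hs ht
      rw [Set.uIcc_of_le hcd] at hs
      rw [Set.uIcc_of_le heg] at ht
      refine Set.mem_Icc.2 ⟨⟨?_, ?_⟩, ⟨?_, ?_⟩⟩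
      · exact le_trans (hx0 ▸ hx (Fin.zero_le _)) hs.1
      · exact le_trans (hy0 ▸ hy (Fin.zero_le _)) ht.1
      · exact le_trans hs.2 (hxl ▸ hx (Fin.le_last _))
      · exact le_trans ht.2 (hyl ▸ hy (Fin.le_last _))
    have hcongrU : (∫ s in c..d, ∫ t in e..g, u (s, t))
        = ∫ s in c..d, ∫ t in e..g, U (s, t) := by
      refine intervalIntegral.integral_congr fun s hs => ?_
      exact intervalIntegral.integral_congr fun t ht => (hUeq (s, t) (hsub hs ht)).symm
    have hcongrV : (∫ s in c..d, ∫ t in e..g, v (s, t))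
        = ∫ s in c..d, ∫ t in e..g, V (s, t) := by
      refine intervalIntegral.integral_congr fun s hs => ?_
      exact intervalIntegral.integral_congr fun t ht => (hVeq (s, t) (hsub hs ht)).symm
    have hFU : Continuous fun s => ∫ t in e..g, U (s, t) :=
      intervalIntegral.continuous_parametric_intervalIntegral_of_continuous'
        (f := fun s t => U (s, t)) (by fun_prop) e g
    have hFV : Continuous fun s => ∫ t in e..g, V (s, t) :=
      intervalIntegral.continuous_parametric_intervalIntegral_of_continuous'
        (f := fun s t => V (s, t)) (by fun_prop) e g
    have hdiff : |(∫ s in c..d, ∫ t in e..g, U (s, t))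
        - ∫ s in c..d, ∫ t in e..g, V (s, t)| ≤ M * (g - e) * (d - c) := by
      rw [← intervalIntegral.integral_sub (hFU.intervalIntegrable c d)
        (hFV.intervalIntegrable c d)]
      have hbound : ∀ s ∈ Set.uIoc c d,
          ‖(∫ t in e..g, U (s, t)) - ∫ t in e..g, V (s, t)‖ ≤ M * (g - e) := by
        intro s hs
        have hs' : s ∈ Set.uIcc c d := Set.uIoc_subset_uIcc hs
        have hIU : IntervalIntegrable (fun t => U (s, t)) volume e g :=
          Continuous.intervalIntegrable (by fun_prop) e g
        have hIV : IntervalIntegrable (fun t => V (s, t)) volume e g :=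
          Continuous.intervalIntegrable (by fun_prop) e g
        rw [← intervalIntegral.integral_sub hIU hIV]
        have h2 : ∀ t ∈ Set.uIoc e g, ‖U (s, t) - V (s, t)‖ ≤ M := by
          intro t ht
          have hmem : (s, t) ∈ S := hsub hs' (Set.uIoc_subset_uIcc ht)
          rw [hUeq _ hmem, hVeq _ hmem, Real.norm_eq_abs]
          exact hMle _ hmem
        calc ‖∫ t in e..g, (U (s, t) - V (s, t))‖
            ≤ M * |g - e| := intervalIntegral.norm_integral_le_of_norm_le_const h2
          _ = M * (g - e) := by rw [abs_of_nonneg (by linarith)]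
      calc |∫ s in c..d, ((∫ t in e..g, U (s, t)) - ∫ t in e..g, V (s, t))|
          ≤ M * (g - e) * |d - c| :=
            intervalIntegral.norm_integral_le_of_norm_le_const hbound
        _ = M * (g - e) * (d - c) := by rw [abs_of_nonneg (by linarith)]
    rw [hcongrU, hcongrV]
    calc |Real.sqrt (∫ s in c..d, ∫ t in e..g, U (s, t))
          - Real.sqrt (∫ s in c..d, ∫ t in e..g, V (s, t))|
        ≤ Real.sqrt |(∫ s in c..d, ∫ t in e..g, U (s, t))
            - ∫ s in c..d, ∫ t in e..g, V (s, t)| := abs_sqrt_sub_sqrt_le _ _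
      _ ≤ Real.sqrt (M * (g - e) * (d - c)) := Real.sqrt_le_sqrt hdiff
      _ = Real.sqrt M * Real.sqrt (g - e) * Real.sqrt (d - c) := by
          rw [Real.sqrt_mul (mul_nonneg hM0 (by linarith)), Real.sqrt_mul hM0]
      _ ≤ Real.sqrt M * ((d - c) + (g - e)) / 2 := by
          have h1 : Real.sqrt (g - e) * Real.sqrt (d - c) ≤ ((d - c) + (g - e)) / 2 := by
            nlinarith [sq_nonneg (Real.sqrt (g - e) - Real.sqrt (d - c)),
              Real.sq_sqrt (sub_nonneg.2 heg), Real.sq_sqrt (sub_nonneg.2 hcd)]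
          have := mul_le_mul_of_nonneg_left h1 (Real.sqrt_nonneg M)
          calc Real.sqrt M * Real.sqrt (g - e) * Real.sqrt (d - c)
              = Real.sqrt M * (Real.sqrt (g - e) * Real.sqrt (d - c)) := by ring
            _ ≤ Real.sqrt M * (((d - c) + (g - e)) / 2) := this
            _ = Real.sqrt M * ((d - c) + (g - e)) / 2 := by ring
  -- assemble
  rw [Jpart, Jpart, ← mul_sub, ← Finset.sum_sub_distrib, abs_mul]
  have habs2 : |(2 : ℝ)| = 2 := by norm_num
  rw [habs2]
  calc 2 * |∑ k : Fin n,
        (Real.sqrt (∫ s in (x k.castSucc)..(x k.succ), ∫ t in (y k.castSucc)..(y k.succ), u (s, t))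
          - Real.sqrt (∫ s in (x k.castSucc)..(x k.succ), ∫ t in (y k.castSucc)..(y k.succ),
              v (s, t)))|
      ≤ 2 * ∑ k : Fin n,
        |Real.sqrt (∫ s in (x k.castSucc)..(x k.succ), ∫ t in (y k.castSucc)..(y k.succ), u (s, t))
          - Real.sqrt (∫ s in (x k.castSucc)..(x k.succ), ∫ t in (y k.castSucc)..(y k.succ),
              v (s, t))| := by
        have := Finset.abs_sum_le_sum_abs
          (fun k : Fin n =>
            Real.sqrt (∫ s in (x k.castSucc)..(x k.succ), ∫ t in (y k.castSucc)..(y k.succ),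
              u (s, t))
            - Real.sqrt (∫ s in (x k.castSucc)..(x k.succ), ∫ t in (y k.castSucc)..(y k.succ),
              v (s, t))) Finset.univ
        linarith
    _ ≤ 2 * ∑ k : Fin n, Real.sqrt M *
          ((x k.succ - x k.castSucc) + (y k.succ - y k.castSucc)) / 2 := by
        have := Finset.sum_le_sum (fun k (_ : k ∈ Finset.univ) => key k)
        linarith
    _ = Real.sqrt M * (a2 - a1 + b2 - b1) := by
        have hsum : ∑ k : Fin n, Real.sqrt M *
            ((x k.succ - x k.castSucc) + (y k.succ - y k.castSucc)) / 2
            = Real.sqrt M * ((∑ k : Fin n, (x k.succ - x k.castSucc))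
              + ∑ k : Fin n, (y k.succ - y k.castSucc)) / 2 := by
          rw [← Finset.sum_add_distrib, Finset.mul_sum, Finset.sum_div]
        rw [hsum, telescope n x, telescope n y, hx0, hy0, hxl, hyl]
        ring
end

section
/- For every β ∈ ℝ, both the x-marginal and the y-marginal of the measure σ_β equal the probability measure λ_β; in particular, for every x ∈ [0,L(β)], ∫_0^{L(β)} 1/(1 − βxy)² dy = L(β)/(1 − βL(β)x). -/
open MeasureTheory

/-- `L(β) = ((1-e^{-β})/β)^{1/2}` for `β ≠ 0`, `L(0) = 1`. -/
noncomputable def Lb (β : ℝ) : ℝ :=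
  if β = 0 then 1 else Real.sqrt ((1 - Real.exp (-β)) / β)

/-- The probability measure `λ_β` on `ℝ`, with density `L(β)/(1-βL(β)x)` on `[0,L(β)]`. -/
noncomputable def lambdaMeasure (β : ℝ) : Measure ℝ :=
  ((volume : Measure ℝ).restrict (Set.Icc 0 (Lb β))).withDensity
    fun x => ENNReal.ofReal (Lb β / (1 - β * Lb β * x))

/-- The measure `σ_β` on `ℝ²`, with density `(1-βxy)^{-2}` on `[0,L(β)]²`. -/
noncomputable def sigmaMeasure (β : ℝ) : Measure (ℝ × ℝ) :=
  ((volume : Measure (ℝ × ℝ)).restrict (Set.Icc (0, 0) (Lb β, Lb β))).withDensity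
    fun p => ENNReal.ofReal (((1 - β * p.1 * p.2) ^ 2)⁻¹)

lemma Lb_nonneg (β : ℝ) : 0 ≤ Lb β := by
  unfold Lb
  split
  · norm_num
  · exact Real.sqrt_nonneg _

lemma pos_denom (β : ℝ) {x y : ℝ} (hx : x ∈ Set.Icc 0 (Lb β)) (hy : y ∈ Set.Icc 0 (Lb β)) :
    0 < 1 - β * x * y := by
  rcases le_or_gt β 0 with hβ | hβ
  · nlinarith [hx.1, hy.1, mul_nonneg hx.1 hy.1]
  · have hA : 0 ≤ (1 - Real.exp (-β)) / β := by
      apply div_nonneg _ hβ.le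
      have : Real.exp (-β) ≤ Real.exp 0 := Real.exp_le_exp.mpr (by linarith)
      rw [Real.exp_zero] at this
      linarith
    have hL2 : β * Lb β ^ 2 = 1 - Real.exp (-β) := by
      unfold Lb
      rw [if_neg hβ.ne', Real.sq_sqrt hA, mul_div_cancel₀ _ hβ.ne']
    have he : 0 < Real.exp (-β) := Real.exp_pos _
    have hxy : x * y ≤ Lb β * Lb β := mul_le_mul hx.2 hy.2 hy.1 (hx.1.trans hx.2)
    nlinarith [hxy, hβ]

lemma key (β : ℝ) {x : ℝ} (hx : x ∈ Set.Icc (0 : ℝ) (Lb β)) :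
    (∫ y in (0 : ℝ)..(Lb β), ((1 - β * x * y) ^ 2)⁻¹) = Lb β / (1 - β * Lb β * x) := by
  have hL0 : 0 ≤ Lb β := Lb_nonneg β
  have huIcc : Set.uIcc (0:ℝ) (Lb β) = Set.Icc 0 (Lb β) := Set.uIcc_of_le hL0
  have hne : ∀ y ∈ Set.Icc (0:ℝ) (Lb β), 1 - β * x * y ≠ 0 :=
    fun y hy => (pos_denom β hx hy).ne'
  have hderiv : ∀ y ∈ Set.uIcc (0:ℝ) (Lb β),
      HasDerivAt (fun y => y / (1 - β * x * y)) (((1 - β * x * y) ^ 2)⁻¹) y := by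
    intro y hy
    rw [huIcc] at hy
    have h0 := hne y hy
    have h1 : HasDerivAt (fun y : ℝ => 1 - β * x * y) (-(β * x)) y := by
      simpa using ((hasDerivAt_id y).const_mul (β * x)).const_sub (1:ℝ)
    have h2 : HasDerivAt (fun y => y / (1 - β * x * y))
        ((1 * (1 - β * x * y) - y * -(β * x)) / (1 - β * x * y) ^ 2) y :=
      (hasDerivAt_id' y).div h1 h0
    convert h2 using 1
    ring
  have hint : IntervalIntegrable (fun y => ((1 - β * x * y) ^ 2)⁻¹) volume 0 (Lb β) := by
    apply ContinuousOn.intervalIntegrable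
    rw [huIcc]
    exact (((continuous_const.sub (continuous_const.mul continuous_id)).pow 2).continuousOn).inv₀
      (fun y hy => pow_ne_zero 2 (hne y hy))
  rw [intervalIntegral.integral_eq_sub_of_hasDerivAt hderiv hint]
  have h1 : 1 - β * x * Lb β ≠ 0 := hne _ (Set.right_mem_Icc.mpr hL0)
  rw [mul_right_comm β (Lb β) x]
  field_simp
  ring

lemma inner_lintegral (β : ℝ) {x : ℝ} (hx : x ∈ Set.Icc (0:ℝ) (Lb β)) :
    (∫⁻ y in Set.Icc (0:ℝ) (Lb β), ENNReal.ofReal (((1 - β * x * y) ^ 2)⁻¹))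
      = ENNReal.ofReal (Lb β / (1 - β * Lb β * x)) := by
  have hne : ∀ y ∈ Set.Icc (0:ℝ) (Lb β), 1 - β * x * y ≠ 0 :=
    fun y hy => (pos_denom β hx hy).ne'
  have hc : ContinuousOn (fun y : ℝ => ((1 - β * x * y) ^ 2)⁻¹) (Set.Icc 0 (Lb β)) :=
    (((continuous_const.sub (continuous_const.mul continuous_id)).pow 2).continuousOn).inv₀
      (fun y hy => pow_ne_zero 2 (hne y hy))
  have hint : IntegrableOn (fun y : ℝ => ((1 - β * x * y) ^ 2)⁻¹) (Set.Icc 0 (Lb β)) :=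
    hc.integrableOn_compact isCompact_Icc
  rw [← ofReal_integral_eq_lintegral_ofReal hint
      (Filter.Eventually.of_forall fun y => by positivity)]
  congr 1
  rw [MeasureTheory.integral_Icc_eq_integral_Ioc,
    ← intervalIntegral.integral_of_le (Lb_nonneg β)]
  exact key β hx

lemma hf_meas (β : ℝ) :
    Measurable fun p : ℝ × ℝ => ENNReal.ofReal (((1 - β * p.1 * p.2) ^ 2)⁻¹) := by
  apply Measurable.ennreal_ofReal
  exact ((measurable_const.sub ((measurable_fst.const_mul β).mul measurable_snd)).pow_const 2).inv

lemma marginal_fst (β : ℝ) : (sigmaMeasure β).map Prod.fst = lambdaMeasure β := by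
  have hA : MeasurableSet (Set.Icc (0:ℝ) (Lb β)) := measurableSet_Icc
  ext s hs
  rw [Measure.map_apply measurable_fst hs, sigmaMeasure,
    withDensity_apply _ (measurable_fst hs),
    Measure.restrict_restrict (measurable_fst hs)]
  have hset : Prod.fst ⁻¹' s ∩ Set.Icc ((0:ℝ),(0:ℝ)) (Lb β, Lb β)
      = (s ∩ Set.Icc 0 (Lb β)) ×ˢ Set.Icc (0:ℝ) (Lb β) := by
    rw [Set.Icc_prod_eq]
    ext p
    simp [Set.mem_prod, Prod.le_def, Set.mem_Icc]
    tauto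
  rw [hset, Measure.volume_eq_prod, ← Measure.prod_restrict,
    lintegral_prod _ (hf_meas β).aemeasurable,
    lambdaMeasure, withDensity_apply _ hs, Measure.restrict_restrict hs]
  apply setLIntegral_congr_fun (hs.inter hA)
  exact fun x hx => inner_lintegral β hx.2

lemma marginal_snd (β : ℝ) : (sigmaMeasure β).map Prod.snd = lambdaMeasure β := by
  have hA : MeasurableSet (Set.Icc (0:ℝ) (Lb β)) := measurableSet_Icc
  ext s hs
  rw [Measure.map_apply measurable_snd hs, sigmaMeasure,
    withDensity_apply _ (measurable_snd hs),
    Measure.restrict_restrict (measurable_snd hs)]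
  have hset : Prod.snd ⁻¹' s ∩ Set.Icc ((0:ℝ),(0:ℝ)) (Lb β, Lb β)
      = Set.Icc (0:ℝ) (Lb β) ×ˢ (s ∩ Set.Icc 0 (Lb β)) := by
    rw [Set.Icc_prod_eq]
    ext p
    simp [Set.mem_prod, Prod.le_def, Set.mem_Icc]
    tauto
  rw [hset, Measure.volume_eq_prod, ← Measure.prod_restrict,
    lintegral_prod_symm _ (hf_meas β).aemeasurable,
    lambdaMeasure, withDensity_apply _ hs, Measure.restrict_restrict hs]
  apply setLIntegral_congr_fun (hs.inter hA)
  intro y hy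
  refine Eq.trans (lintegral_congr fun x => ?_) (inner_lintegral β hy.2)
  rw [mul_right_comm]

/-- Both marginals of `σ_β` equal `λ_β`; in particular, for every `x ∈ [0,L(β)]`,
`∫_0^{L(β)} (1-βxy)^{-2} dy = L(β)/(1-βL(β)x)`. -/
theorem sigma_marginals (β : ℝ) :
    (sigmaMeasure β).map Prod.fst = lambdaMeasure β ∧
    (sigmaMeasure β).map Prod.snd = lambdaMeasure β ∧
    ∀ x ∈ Set.Icc (0 : ℝ) (Lb β),
      (∫ y in (0 : ℝ)..(Lb β), ((1 - β * x * y) ^ 2)⁻¹) = Lb β / (1 - β * Lb β * x) := by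
  exact ⟨marginal_fst β, marginal_snd β, fun x hx => key β hx⟩
end
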